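/- For d ≥ 2 and 1 ≤ j ≤ d, one has Δ^{d−1} F_{d,d−1}(j) = f(1)f(2)⋯f(d−1) · (−1)^{j−1} C(d−1, d−j), where F_{d,d−1}(x) = f(x−d+1)⋯f(x−1) and f(x) = x(d−x). -/

import Mathlib

/-- The finite difference operator `Δ g (x) = g (x+1) - g x`. -/
noncomputable def fdiff (g : ℝ → ℝ) : ℝ → ℝ := fun x => g (x + 1) - g x

/-- For `d ≥ 2` and `1 ≤ j ≤ d`, with `f(x) = x(d-x)` and
`F_{d,d-1}(x) = f(x-(d-1)) ⋯ f(x-1)`, one has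
`Δ^{d-1} F_{d,d-1}(j) = f(1) f(2) ⋯ f(d-1) · (-1)^{j-1} C(d-1, d-j)`. -/
theorem stmt8 (d j : ℕ) (hd : 2 ≤ d) (hj1 : 1 ≤ j) (hj2 : j ≤ d)
    (f F : ℝ → ℝ)
    (hf : ∀ x, f x = x * ((d : ℝ) - x))
    (hF : ∀ x, F x = ∏ i ∈ Finset.range (d - 1), f (x - (d - 1 : ℕ) + i)) :
    fdiff^[d - 1] F (j : ℝ) =
      (∏ i ∈ Finset.Icc 1 (d - 1), f (i : ℝ)) *
        (-1 : ℝ) ^ (j - 1) * ((d - 1).choose (d - j) : ℝ) := by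
  -- `F` vanishes at integers `m` with `1 ≤ m ≤ 2d-1`, `m ≠ d`.
  have hFzero : ∀ m : ℕ, 1 ≤ m → m ≤ 2 * d - 1 → m ≠ d → F (m : ℝ) = 0 := by
    intro m hm1 hm2 hmd
    rw [hF]
    rcases lt_or_gt_of_ne hmd with h | h
    · apply Finset.prod_eq_zero (i := d - 1 - m)
      · exact Finset.mem_range.mpr (by omega)
      · have : (m : ℝ) - ((d - 1 : ℕ) : ℝ) + ((d - 1 - m : ℕ) : ℝ) = 0 := by
          have h1 : ((d - 1 : ℕ) : ℝ) = (d : ℝ) - 1 := by push_cast [Nat.cast_sub (by omega : 1 ≤ d)]; ring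
          have h2 : ((d - 1 - m : ℕ) : ℝ) = (d : ℝ) - 1 - m := by
            push_cast [Nat.cast_sub (by omega : m ≤ d - 1), Nat.cast_sub (by omega : 1 ≤ d)]; ring
          rw [h1, h2]; ring
        rw [this, hf]; ring
    · apply Finset.prod_eq_zero (i := 2 * d - 1 - m)
      · exact Finset.mem_range.mpr (by omega)
      · have : (m : ℝ) - ((d - 1 : ℕ) : ℝ) + ((2 * d - 1 - m : ℕ) : ℝ) = (d : ℝ) := by
          have h1 : ((d - 1 : ℕ) : ℝ) = (d : ℝ) - 1 := by push_cast [Nat.cast_sub (by omega : 1 ≤ d)]; ring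
          have h2 : ((2 * d - 1 - m : ℕ) : ℝ) = 2 * (d : ℝ) - 1 - m := by
            push_cast [Nat.cast_sub (by omega : m ≤ 2 * d - 1), Nat.cast_sub (by omega : 1 ≤ 2 * d)]; ring
          rw [h1, h2]; ring
        rw [this, hf]; ring
  have hfd : fdiff = fwdDiff (1 : ℝ) := rfl
  rw [hfd, fwdDiff_iter_eq_sum_shift]
  rw [Finset.sum_eq_single (d - j)]
  · have hjd : (j : ℝ) + (d - j : ℕ) • (1 : ℝ) = (d : ℝ) := by
      rw [nsmul_eq_mul, mul_one, ← Nat.cast_add]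
      congr 1; omega
    rw [hjd]
    have hFd : F (d : ℝ) = ∏ i ∈ Finset.Icc 1 (d - 1), f (i : ℝ) := by
      rw [hF]
      have : Finset.Icc 1 (d - 1) = Finset.Ico 1 d := by
        ext x; simp only [Finset.mem_Icc, Finset.mem_Ico]; omega
      rw [this, Finset.prod_Ico_eq_prod_range]
      apply Finset.prod_congr (by norm_num)
      intro i _
      congr 1
      push_cast [Nat.cast_sub (by omega : 1 ≤ d)]
      ring
    rw [hFd]
    have hexp : d - 1 - (d - j) = j - 1 := by omega
    rw [hexp, zsmul_eq_mul]
    push_cast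
    ring
  · intro k hk hkne
    have : F ((j : ℝ) + k • (1 : ℝ)) = 0 := by
      rw [nsmul_eq_mul, mul_one, ← Nat.cast_add]
      apply hFzero (j + k) (by omega)
      · simp only [Finset.mem_range] at hk; omega
      · omega
    rw [this, smul_zero]
  · intro h
    exact absurd (Finset.mem_range.mpr (by omega)) h
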